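/- Any 2n×2n real invertible skew-symmetric matrix A can be written as A = O [[0, Λ], [−Λ, 0]] Oᵀ, where O is a 2n×2n real orthogonal matrix and Λ is an n×n positive diagonal matrix. -/

import Mathlib

open Matrix Module
open scoped RealInnerProductSpace

lemma skew_core (n : ℕ) : ∀ (E : Type) [NormedAddCommGroup E] [InnerProductSpace ℝ E]
    [FiniteDimensional ℝ E], Module.finrank ℝ E = 2 * n →
    ∀ f : E →ₗ[ℝ] E, (∀ x y, ⟪f x, y⟫ = -⟪x, f y⟫) → Function.Injective f →
    ∃ (u : Fin n ⊕ Fin n → E) (lam : Fin n → ℝ),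
      (∀ i j, ⟪u i, u j⟫ = if i = j then 1 else 0) ∧ (∀ i, 0 < lam i) ∧
      (∀ i, f (u (Sum.inl i)) = (-lam i) • u (Sum.inr i)) ∧
      (∀ i, f (u (Sum.inr i)) = lam i • u (Sum.inl i)) := by
  induction n with
  | zero =>
    intro E _ _ _ _ f _ _
    refine ⟨fun i => i.elim (·.elim0) (·.elim0), Fin.elim0, ?_, (·.elim0), (·.elim0), (·.elim0)⟩
    rintro (i | i) _ <;> exact i.elim0
  | succ n ih =>
    intro E _ _ _ hdim f hf hinj
    have hdim' : Module.finrank ℝ E = 2 * n + 2 := by omega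
    set T : E →ₗ[ℝ] E := -(f ∘ₗ f) with hTdef
    have hTsymm : T.IsSymmetric := by
      intro x y
      have h1 := hf (f x) y
      have h2 := hf x (f y)
      simp only [hTdef, LinearMap.neg_apply, LinearMap.comp_apply, inner_neg_left,
        inner_neg_right]
      linarith
    set i0 : Fin (2 * n + 2) := ⟨0, by omega⟩ with hi0
    set v : E := hTsymm.eigenvectorBasis hdim' i0 with hvdef
    set μ : ℝ := hTsymm.eigenvalues hdim' i0 with hμdef
    have hTv : -f (f v) = μ • v := by
      have h := hTsymm.apply_eigenvectorBasis hdim' i0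
      rw [← hvdef, ← hμdef] at h
      exact_mod_cast h
    have hffv : f (f v) = -(μ • v) := by rw [← hTv, neg_neg]
    have hvnorm : ‖v‖ = 1 := (hTsymm.eigenvectorBasis hdim').orthonormal.1 i0
    have hvv : ⟪v, v⟫ = 1 := by
      rw [real_inner_self_eq_norm_sq, hvnorm]; norm_num
    have hvne : v ≠ 0 := by
      intro h; rw [h, norm_zero] at hvnorm; norm_num at hvnorm
    have hfvfv : ⟪f v, f v⟫ = μ := by
      have h1 := hf (f v) v
      have : ⟪f (f v), v⟫ = -μ := by
        rw [hffv, inner_neg_left, inner_smul_left]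
        simp [hvv, hvnorm]
      rw [this] at h1
      have := real_inner_comm (f v) v
      nlinarith [hf v v, real_inner_comm (f v) v]
    have hμpos : 0 < μ := by
      have hfvne : f v ≠ 0 := fun h => hvne (hinj (by simpa using h))
      have h2 : (0:ℝ) < ‖f v‖ ^ 2 := pow_pos (norm_pos_iff.mpr hfvne) 2
      rw [← real_inner_self_eq_norm_sq, hfvfv] at h2
      exact h2
    set lam0 : ℝ := Real.sqrt μ with hlam0
    have hlam0pos : 0 < lam0 := Real.sqrt_pos.mpr hμpos
    have hlam0sq : lam0 * lam0 = μ := Real.mul_self_sqrt hμpos.le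
    set w : E := lam0⁻¹ • f v with hwdef
    have hfv : f v = lam0 • w := by
      rw [hwdef, smul_smul, mul_inv_cancel₀ hlam0pos.ne', one_smul]
    have hfw : f w = -(lam0 • v) := by
      have hscal : lam0⁻¹ * μ = lam0 := by
        field_simp
        linarith [hlam0sq]
      rw [hwdef, LinearMap.map_smul, hffv, smul_neg, smul_smul, hscal]
    have hvfv : ⟪v, f v⟫ = 0 := by
      have := hf v v
      have h2 := real_inner_comm (f v) v
      linarith
    have hvw : ⟪v, w⟫ = 0 := by
      rw [hwdef, inner_smul_right, hvfv, mul_zero]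
    have hwv : ⟪w, v⟫ = 0 := by rw [real_inner_comm]; exact hvw
    have hww : ⟪w, w⟫ = 1 := by
      rw [hwdef, inner_smul_left, inner_smul_right, hfvfv]
      simp only [RCLike.conj_to_real, map_inv₀]
      field_simp
      nlinarith
    -- the span of v and w
    set g : Fin 2 → E := ![v, w] with hg
    have hgon : Orthonormal ℝ g := by
      rw [orthonormal_iff_ite]
      intro i j
      fin_cases i <;> fin_cases j <;>
        simp [hg, hvv, hvw, hwv, hww, hvnorm,
          (by rw [norm_eq_sqrt_real_inner, hww, Real.sqrt_one] : ‖w‖ = 1)]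
    set W : Submodule ℝ E := Submodule.span ℝ (Set.range g) with hW
    have hvW : v ∈ W := Submodule.subset_span ⟨0, rfl⟩
    have hwW : w ∈ W := Submodule.subset_span ⟨1, rfl⟩
    set K : Submodule ℝ E := Wᗮ with hK
    have hWdim : finrank ℝ W = 2 := by
      rw [hW, finrank_span_eq_card hgon.linearIndependent]
      simp
    have hKdim : finrank ℝ K = 2 * n := by
      have h := W.finrank_add_finrank_orthogonal
      rw [hWdim, hdim', ← hK] at h
      omega
    have mem_K : ∀ x : E, ⟪v, x⟫ = 0 → ⟪w, x⟫ = 0 → x ∈ K := by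
      intro x h1 h2
      rw [hK, Submodule.mem_orthogonal]
      intro a ha
      induction ha using Submodule.span_induction with
      | mem a ha =>
        obtain ⟨i, rfl⟩ := ha
        fin_cases i <;> simpa [hg]
      | zero => simp
      | add a b _ _ ha hb => rw [inner_add_left, ha, hb, add_zero]
      | smul c a _ ha => rw [inner_smul_left, ha, mul_zero]
    have hvK : ∀ x ∈ K, ⟪v, x⟫ = 0 := fun x hx =>
      Submodule.inner_right_of_mem_orthogonal hvW hx
    have hwK : ∀ x ∈ K, ⟪w, x⟫ = 0 := fun x hx =>
      Submodule.inner_right_of_mem_orthogonal hwW hx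
    have hKinv : ∀ x ∈ K, f x ∈ K := by
      intro x hx
      apply mem_K
      · have := hf x v
        have h2 := real_inner_comm (f x) v
        have h3 : ⟪x, f v⟫ = 0 := by
          rw [hfv, inner_smul_right, real_inner_comm]
          rw [hwK x hx, mul_zero]
        linarith
      · have := hf x w
        have h2 := real_inner_comm (f x) w
        have h3 : ⟪x, f w⟫ = 0 := by
          rw [hfw, inner_neg_right, inner_smul_right, real_inner_comm, hvK x hx]
          ring
        linarith
    set f' : K →ₗ[ℝ] K := f.restrict hKinv with hf'def
    have hf'apply : ∀ x : K, (f' x : E) = f (x : E) := fun x => rfl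
    have hf'skew : ∀ x y : K, ⟪f' x, y⟫ = -⟪x, f' y⟫ := by
      intro x y
      have := hf (x : E) (y : E)
      simpa [Submodule.coe_inner, hf'apply] using this
    have hf'inj : Function.Injective f' := by
      intro x y h
      have : f (x : E) = f (y : E) := by
        rw [← hf'apply, ← hf'apply, h]
      exact Subtype.coe_injective (hinj this)
    obtain ⟨u', lam', hor', hpos', h1', h2'⟩ := ih K hKdim f' hf'skew hf'inj
    refine ⟨Sum.elim (Fin.cons w fun j => (u' (Sum.inl j) : E))
        (Fin.cons v fun j => (u' (Sum.inr j) : E)), Fin.cons lam0 lam', ?_, ?_, ?_, ?_⟩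
    · have hKv : ∀ x : K, ⟪v, (x : E)⟫ = 0 := fun x => hvK x x.2
      have hKw : ∀ x : K, ⟪w, (x : E)⟫ = 0 := fun x => hwK x x.2
      have hKv' : ∀ x : K, ⟪(x : E), v⟫ = 0 := fun x => by
        rw [real_inner_comm]; exact hKv x
      have hKw' : ∀ x : K, ⟪(x : E), w⟫ = 0 := fun x => by
        rw [real_inner_comm]; exact hKw x
      have hcoe : ∀ a b, ⟪(u' a : E), (u' b : E)⟫ = if a = b then 1 else 0 := by
        intro a b
        rw [← hor' a b]
        rfl
      rintro (i | i) (j | j) <;>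
        induction i using Fin.cases <;>
        induction j using Fin.cases <;>
        simp [hvv, hww, hvw, hwv, hKv, hKw, hKv', hKw', hcoe, Fin.succ_ne_zero,
          (Fin.succ_ne_zero _).symm, Sum.inl.injEq, Sum.inr.injEq, Fin.succ_inj, hvnorm,
          (by rw [norm_eq_sqrt_real_inner, hww, Real.sqrt_one] : ‖w‖ = 1)]
    · intro i
      induction i using Fin.cases with
      | zero => simpa using hlam0pos
      | succ j => simpa using hpos' j
    · intro i
      induction i using Fin.cases with
      | zero => simpa using hfw
      | succ j =>
        have := h1' j
        have hc := congrArg (Subtype.val) this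
        simpa [hf'apply] using hc
    · intro i
      induction i using Fin.cases with
      | zero => simpa using hfv
      | succ j =>
        have := h2' j
        have hc := congrArg (Subtype.val) this
        simpa [hf'apply] using hc

/-- Any invertible real skew-symmetric matrix `A` equals
`O [[0, Λ], [-Λ, 0]] Oᵀ` with `O` orthogonal and `Λ` positive diagonal. -/
theorem skew_symmetric_canonical_form (n : ℕ)
    (A : Matrix (Fin n ⊕ Fin n) (Fin n ⊕ Fin n) ℝ)
    (hskew : Aᵀ = -A) (hA : IsUnit A.det) :
    ∃ (O : Matrix (Fin n ⊕ Fin n) (Fin n ⊕ Fin n) ℝ) (lam : Fin n → ℝ),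
      Oᵀ * O = 1 ∧ (∀ i, 0 < lam i) ∧
      A = O * Matrix.fromBlocks 0 (Matrix.diagonal lam) (-(Matrix.diagonal lam)) 0 * Oᵀ := by
  classical
  have hA' : IsUnit A := (Matrix.isUnit_iff_isUnit_det A).mpr hA
  have key : ∀ x y : (Fin n ⊕ Fin n) → ℝ, (A *ᵥ x) ⬝ᵥ y = -(x ⬝ᵥ (A *ᵥ y)) := by
    intro x y
    rw [dotProduct_comm, Matrix.dotProduct_mulVec, ← Matrix.mulVec_transpose, hskew,
      Matrix.neg_mulVec, neg_dotProduct, dotProduct_comm]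
  let f : EuclideanSpace ℝ (Fin n ⊕ Fin n) →ₗ[ℝ] EuclideanSpace ℝ (Fin n ⊕ Fin n) :=
    { toFun := fun x => WithLp.toLp 2 (A.mulVec x)
      map_add' := fun x y => by simp [Matrix.mulVec_add]
      map_smul' := fun c x => by simp [Matrix.mulVec_smul] }
  have hfskew : ∀ x y, ⟪f x, y⟫ = -⟪x, f y⟫ := by
    intro x y
    have h := key x y
    simpa [PiLp.inner_apply, dotProduct, starRingEnd_apply, star_trivial, f, mul_comm] using h
  have hfinj : Function.Injective f := fun x y h => WithLp.ofLp_injective 2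
    (Matrix.mulVec_injective_iff_isUnit.mpr hA' (congrArg WithLp.ofLp h))
  have hdim : Module.finrank ℝ (EuclideanSpace ℝ (Fin n ⊕ Fin n)) = 2 * n := by
    rw [finrank_euclideanSpace]
    simp; ring
  obtain ⟨u, lam, hor, hpos, h1, h2⟩ := skew_core n _ hdim f hfskew hfinj
  set O : Matrix (Fin n ⊕ Fin n) (Fin n ⊕ Fin n) ℝ := Matrix.of (fun j k => u k j) with hO
  have hOO : Oᵀ * O = 1 := by
    ext k k'
    have h := hor k k'
    simp only [PiLp.inner_apply, starRingEnd_apply, star_trivial] at h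
    simpa [hO, Matrix.mul_apply, Matrix.one_apply, mul_comm] using h
  have hOO' : O * Oᵀ = 1 := mul_eq_one_comm.mp hOO
  have hmul : A * O =
      O * Matrix.fromBlocks 0 (Matrix.diagonal lam) (-(Matrix.diagonal lam)) 0 := by
    ext j k
    rcases k with i | i
    · have hj := congrArg (fun x => x j) (h1 i)
      simp only [PiLp.smul_apply, smul_eq_mul] at hj
      have lhs : (A * O) j (Sum.inl i) = (A *ᵥ u (Sum.inl i)) j := by
        simp [hO, Matrix.mul_apply, Matrix.mulVec, dotProduct]
      rw [lhs]
      have : (A *ᵥ u (Sum.inl i)) j = -lam i * u (Sum.inr i) j := hj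
      rw [this]
      simp [hO, Matrix.mul_apply, Fintype.sum_sum_type, Matrix.diagonal_apply, mul_ite,
        ite_mul, mul_zero, zero_mul, Finset.sum_ite_eq', mul_comm]
    · have hj := congrArg (fun x => x j) (h2 i)
      simp only [PiLp.smul_apply, smul_eq_mul] at hj
      have lhs : (A * O) j (Sum.inr i) = (A *ᵥ u (Sum.inr i)) j := by
        simp [hO, Matrix.mul_apply, Matrix.mulVec, dotProduct]
      rw [lhs]
      have : (A *ᵥ u (Sum.inr i)) j = lam i * u (Sum.inl i) j := hj
      rw [this]
      simp [hO, Matrix.mul_apply, Fintype.sum_sum_type, Matrix.diagonal_apply, mul_ite,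
        ite_mul, mul_zero, zero_mul, Finset.sum_ite_eq', mul_comm]
  refine ⟨O, lam, hOO, hpos, ?_⟩
  calc A = A * (O * Oᵀ) := by rw [hOO', mul_one]
    _ = (A * O) * Oᵀ := by rw [mul_assoc]
    _ = O * Matrix.fromBlocks 0 (Matrix.diagonal lam) (-(Matrix.diagonal lam)) 0 * Oᵀ := by
        rw [hmul]
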